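/- Let T be an x-monotone terrain, h a height above T, and f(h) the leftmost point among the rightmost placements F(e,h) over all edges e of T (where F(e,h) is the rightmost point on L(h) fully seeing e). Then every point p of T with x(v₁) ≤ x(p) ≤ x(f(h)) is visible from f(h). -/
import Mathlib


open Set

/-- An x-monotone polygonal terrain: vertices `x 0 < x 1 < ⋯ < x N` on the x-axis,
heights given by `f`, which is affine with slope `m i` and intercept `c i` on the
`i`-th edge. -/
structure Terrain where
  N : ℕ
  hN : 1 ≤ N
  x : Fin (N + 1) → ℝ
  hx : StrictMono x
  f : ℝ → ℝ
  m : Fin N → ℝ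
  c : Fin N → ℝ
  haff : ∀ i : Fin N, ∀ t ∈ Set.Icc (x i.castSucc) (x i.succ), f t = m i * t + c i

/-- Left endpoint of the domain of the terrain. -/
def Terrain.a (T : Terrain) : ℝ := T.x 0

/-- Right endpoint of the domain of the terrain. -/
def Terrain.b (T : Terrain) : ℝ := T.x (Fin.last T.N)

/-- Visibility: the segment from terrain point `p` to guard `u` stays on or above
the terrain. -/
def Terrain.Vis (T : Terrain) (p u : ℝ × ℝ) : Prop :=
  ∀ q ∈ segment ℝ p u, q.1 ∈ Set.Icc T.a T.b → T.f q.1 ≤ q.2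

/-- Full visibility of the `i`-th edge from the point `u`. -/
def Terrain.EdgeVis (T : Terrain) (i : Fin T.N) (u : ℝ × ℝ) : Prop :=
  ∀ t ∈ Set.Icc (T.x i.castSucc) (T.x i.succ), T.Vis (t, T.f t) u

/-- Every point of the domain lies on some edge. -/
lemma exists_edge (T : Terrain) {t : ℝ} (ht : t ∈ Set.Icc T.a T.b) :
    ∃ i : Fin T.N, t ∈ Set.Icc (T.x i.castSucc) (T.x i.succ) := by
  classical
  set S : Finset (Fin (T.N + 1)) := Finset.univ.filter (fun j => T.x j ≤ t) with hSdef
  have hS : S.Nonempty := ⟨0, by simp [hSdef]; exact ht.1⟩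
  set j := S.max' hS with hjdef
  have hj : T.x j ≤ t := by
    have hmem : j ∈ S := S.max'_mem hS
    rw [hSdef, Finset.mem_filter] at hmem
    exact hmem.2
  by_cases hlt : (j : ℕ) < T.N
  · refine ⟨⟨j, hlt⟩, ?_, ?_⟩
    · have : Fin.castSucc ⟨(j : ℕ), hlt⟩ = j := by ext; simp
      rw [this]; exact hj
    · by_contra hcon
      push_neg at hcon
      have hmem : Fin.succ ⟨(j : ℕ), hlt⟩ ∈ S := by
        rw [hSdef, Finset.mem_filter]
        exact ⟨Finset.mem_univ _, le_of_lt hcon⟩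
      have hle := S.le_max' _ hmem
      rw [← hjdef] at hle
      have : ((j : ℕ) + 1) ≤ (j : ℕ) := by
        simpa [Fin.le_def, Fin.val_succ] using hle
      omega
  · have hjN : (j : ℕ) = T.N := by
      have := j.isLt; omega
    have hjlast : j = Fin.last T.N := by ext; simpa using hjN
    have hteq : t = T.x (Fin.last T.N) := by
      have h1 : t ≤ T.x (Fin.last T.N) := ht.2
      have h2 : T.x (Fin.last T.N) ≤ t := by rw [← hjlast]; exact hj
      linarith
    have hN1 : T.N - 1 < T.N := by have := T.hN; omega
    refine ⟨⟨T.N - 1, hN1⟩, ?_, ?_⟩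
    · rw [hteq]
      exact T.hx.monotone (by rw [Fin.le_def]; simp only [Fin.coe_castSucc, Fin.val_last]; omega)
    · rw [hteq]
      exact T.hx.monotone (by rw [Fin.le_def]; simp only [Fin.val_succ, Fin.val_last]; omega)

/-- Every point `p` of `T` with `x(v₁) ≤ x(p) ≤ x(f(h))` is visible from `f(h)`,
where `f(h)` is the leftmost among the rightmost full-visibility placements
`F(e,h)` over all edges `e` of `T`. -/
theorem stmt7 (T : Terrain) (h : ℝ)
    (hh : ∀ t ∈ Set.Icc T.a T.b, T.f t ≤ h)
    (F : Fin T.N → ℝ)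
    (hFvis : ∀ i, T.EdgeVis i (F i, h))
    (hFmax : ∀ i, ∀ p : ℝ, T.EdgeVis i (p, h) → p ≤ F i)
    (fh : ℝ) (hfh₁ : ∀ i, fh ≤ F i) (hfh₂ : ∃ i, fh = F i)
    (t : ℝ) (ht : t ∈ Set.Icc T.a T.b) (htf : t ≤ fh) :
    T.Vis (t, T.f t) (fh, h) := by
  obtain ⟨i, hti⟩ := exists_edge T ht
  have hVis : T.Vis (t, T.f t) (F i, h) := hFvis i t hti
  have hfT : T.f t ≤ h := hh t ht
  have hFi : fh ≤ F i := hfh₁ i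
  intro q hq hq1
  rw [segment_eq_image] at hq
  obtain ⟨θ, ⟨hθ0, hθ1⟩, hqe⟩ := hq
  subst hqe
  simp only [Prod.smul_mk, Prod.mk_add_mk, smul_eq_mul] at hq1 ⊢
  by_cases htF : t = F i
  · have hfhe : fh = t := le_antisymm (htF ▸ hFi) htf
    rw [hfhe]
    have hx1 : (1 - θ) * t + θ * t = t := by ring
    rw [hx1]
    nlinarith
  · have htFlt : t < F i := lt_of_le_of_ne (le_trans htf hFi) htF
    have hd : (0:ℝ) < F i - t := by linarith
    set θ' := θ * (fh - t) / (F i - t) with hθ'def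
    have hθ'0 : 0 ≤ θ' := by
      apply div_nonneg _ (le_of_lt hd)
      nlinarith
    have hθ'θ : θ' ≤ θ := by
      rw [hθ'def, div_le_iff₀ hd]
      nlinarith
    have hxeq : (1 - θ') * t + θ' * F i = (1 - θ) * t + θ * fh := by
      have : θ' * (F i - t) = θ * (fh - t) := by
        rw [hθ'def]; field_simp
      nlinarith [this]
    have hmem : ((1 - θ') • ((t : ℝ), T.f t) + θ' • ((F i : ℝ), h)) ∈
        segment ℝ ((t : ℝ), T.f t) ((F i : ℝ), h) := by
      rw [segment_eq_image]
      exact ⟨θ', ⟨hθ'0, le_trans hθ'θ hθ1⟩, rfl⟩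
    have hkey := hVis _ hmem
    simp only [Prod.smul_mk, Prod.mk_add_mk, smul_eq_mul] at hkey
    rw [hxeq] at hkey
    have hkey' := hkey hq1
    nlinarith [hkey']
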